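/- For binary perfect phylogenies pi1 of size n1 and pi2 of size n2, the number of unranked unlabeled tree shapes compatible with the perfect phylogeny (pi1, pi2) equals |G(pi1)|·|G(pi2)| − |G(pi1 ∧ pi2)|·(|G(pi1 ∧ pi2)| − 1)/2 if pi1 ∧ pi2 is nonempty, and |G(pi1)|·|G(pi2)| otherwise, where G(pi) denotes the set of unranked unlabeled tree shapes compatible with pi. -/

import Mathlib

/-- A binary perfect phylogeny: a rooted binary tree with positive integer leaf labels
(leaf counts). -/
inductive PP : Type
  | leaf : ℕ → PP
  | node : PP → PP → PP
deriving DecidableEq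

namespace PP

/-- Total number of samples of a binary perfect phylogeny. -/
def size : PP → ℕ
  | leaf n => n
  | node l r => l.size + r.size

/-- One elementary coarsening step: collapsing a cherry (two pendant leaf edges into a
single leaf carrying the sum of the counts), anywhere in the tree; children are unordered. -/
inductive Step : PP → PP → Prop
  | cherry (a b : ℕ) : Step (node (leaf a) (leaf b)) (leaf (a + b))
  | swap (s t : PP) : Step (node s t) (node t s)
  | left {t t' : PP} (s : PP) : Step t t' → Step (node t s) (node t' s)
  | right {t t' : PP} (s : PP) : Step t t' → Step (node s t) (node s t')

/-- `π.Refines σ` (written `π ≤ σ` in the paper) iff `σ` is obtained from `π` by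
sequentially collapsing cherries. -/
def Refines (π σ : PP) : Prop := Relation.ReflTransGen Step π σ

end PP

/-- An unranked unlabeled rooted binary tree (with ordered children; unordered tree
shapes are obtained as the quotient by `Shape.Equiv`). -/
inductive Shape : Type
  | leaf : Shape
  | node : Shape → Shape → Shape

namespace Shape

/-- Number of leaves. -/
def leaves : Shape → ℕ
  | leaf => 1
  | node l r => l.leaves + r.leaves

/-- Equality of rooted binary trees as unordered (unlabeled) tree shapes. -/
inductive Equiv : Shape → Shape → Prop
  | leaf : Equiv leaf leaf
  | node {a b c d : Shape} : Equiv a c → Equiv b d → Equiv (node a b) (node c d)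
  | swap {a b c d : Shape} : Equiv a d → Equiv b c → Equiv (node a b) (node c d)

/-- The perfect phylogeny `P(T)` obtained from a tree shape by assigning count 1 to
every leaf. -/
def toPP : Shape → PP
  | leaf => PP.leaf 1
  | node l r => PP.node l.toPP r.toPP

end Shape

/-- `shapeCount n` is the number of unranked unlabeled binary tree shapes with `n`
leaves (the `n`-th Wedderburn–Etherington number). -/
noncomputable def shapeCount (n : ℕ) : ℕ :=
  Nat.card {q : Quot Shape.Equiv // ∃ t : Shape, Quot.mk _ t = q ∧ t.leaves = n}

/-- `Gc π` is the number of unranked unlabeled tree shapes compatible with the binary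
perfect phylogeny `π`, i.e. whose associated perfect phylogeny refines `π`. -/
noncomputable def Gc (π : PP) : ℕ :=
  Nat.card {q : Quot Shape.Equiv //
    ∃ t : Shape, Quot.mk _ t = q ∧ PP.Refines t.toPP π}

namespace PPProof

abbrev Q := Quot Shape.Equiv

lemma equiv_refl : ∀ t : Shape, Shape.Equiv t t := by
  intro t
  induction t with
  | leaf => exact .leaf
  | node l r ihl ihr => exact .node ihl ihr

lemma equiv_symm {a b : Shape} (h : Shape.Equiv a b) : Shape.Equiv b a := by
  induction h with
  | leaf => exact .leaf
  | node _ _ ih1 ih2 => exact .node ih1 ih2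
  | swap _ _ ih1 ih2 => exact .swap ih2 ih1

lemma equiv_trans : ∀ (a b c : Shape), Shape.Equiv a b → Shape.Equiv b c → Shape.Equiv a c := by
  intro a
  induction a with
  | leaf => intro b c h1 h2; cases h1; cases h2; exact .leaf
  | node x y ihx ihy =>
    intro b c h1 h2
    cases h1 with
    | node hxc hyd =>
      cases h2 with
      | node h2a h2b => exact .node (ihx _ _ hxc h2a) (ihy _ _ hyd h2b)
      | swap h2a h2b => exact .swap (ihx _ _ hxc h2a) (ihy _ _ hyd h2b)
    | swap hxd hyc =>
      cases h2 with
      | node h2a h2b => exact .swap (ihx _ _ hxd h2b) (ihy _ _ hyc h2a)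
      | swap h2a h2b => exact .node (ihx _ _ hxd h2b) (ihy _ _ hyc h2a)

lemma equivalence_equiv : Equivalence Shape.Equiv :=
  ⟨equiv_refl, equiv_symm, fun h1 h2 => equiv_trans _ _ _ h1 h2⟩

lemma mk_eq_mk {a b : Shape} :
    Quot.mk Shape.Equiv a = Quot.mk Shape.Equiv b ↔ Shape.Equiv a b := by
  rw [Quot.eq]
  exact equivalence_equiv.eqvGen_iff

def qnode : Q → Q → Q :=
  Quot.map₂ Shape.node (fun a _ _ h => .node (equiv_refl a) h)
    (fun _ _ b h => .node h (equiv_refl b))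

@[simp] lemma qnode_mk (a b : Shape) :
    qnode (Quot.mk _ a) (Quot.mk _ b) = Quot.mk _ (Shape.node a b) := rfl

lemma equiv_node_iff {a b c d : Shape} :
    Shape.Equiv (.node a b) (.node c d) ↔
      (Shape.Equiv a c ∧ Shape.Equiv b d) ∨ (Shape.Equiv a d ∧ Shape.Equiv b c) := by
  constructor
  · intro h
    cases h with
    | node h1 h2 => exact .inl ⟨h1, h2⟩
    | swap h1 h2 => exact .inr ⟨h1, h2⟩
  · rintro (⟨h1, h2⟩ | ⟨h1, h2⟩)
    exacts [.node h1 h2, .swap h1 h2]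

lemma qnode_eq_qnode {x y x' y' : Q} :
    qnode x y = qnode x' y' ↔ (x = x' ∧ y = y') ∨ (x = y' ∧ y = x') := by
  induction x using Quot.ind
  induction y using Quot.ind
  induction x' using Quot.ind
  induction y' using Quot.ind
  simp only [qnode_mk, mk_eq_mk, equiv_node_iff]

lemma refines_node_mono {a b c d : PP} (h1 : PP.Refines a c) (h2 : PP.Refines b d) :
    PP.Refines (PP.node a b) (PP.node c d) :=
  Relation.ReflTransGen.trans
    (Relation.ReflTransGen.lift (fun t => PP.node t b) (fun _ _ h => PP.Step.left b h) _ _ h1)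
    (Relation.ReflTransGen.lift (fun t => PP.node c t) (fun _ _ h => PP.Step.right c h) _ _ h2)

lemma refines_swap (a b : PP) : PP.Refines (PP.node a b) (PP.node b a) :=
  Relation.ReflTransGen.single (PP.Step.swap a b)

lemma refines_of_leaf {n : ℕ} {σ : PP} (h : PP.Refines (PP.leaf n) σ) : σ = PP.leaf n := by
  induction h with
  | refl => rfl
  | tail _ st ih => subst ih; cases st

lemma refines_node_inv {a b σ : PP} (h : PP.Refines (PP.node a b) σ) :
    ∀ c d, σ = PP.node c d →
      (PP.Refines a c ∧ PP.Refines b d) ∨ (PP.Refines a d ∧ PP.Refines b c) := by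
  induction h with
  | refl => intro c d hcd; cases hcd; exact .inl ⟨.refl, .refl⟩
  | tail h st ih =>
    intro c d hcd
    subst hcd
    cases st with
    | swap s t =>
      rcases ih d c rfl with ⟨h1, h2⟩ | ⟨h1, h2⟩
      · exact .inr ⟨h1, h2⟩
      · exact .inl ⟨h1, h2⟩
    | left s hst =>
      rcases ih _ d rfl with ⟨h1, h2⟩ | ⟨h1, h2⟩
      · exact .inl ⟨h1.tail hst, h2⟩
      · exact .inr ⟨h1, h2.tail hst⟩
    | right s hst =>
      rcases ih c _ rfl with ⟨h1, h2⟩ | ⟨h1, h2⟩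
      · exact .inl ⟨h1, h2.tail hst⟩
      · exact .inr ⟨h1.tail hst, h2⟩

lemma refines_node_iff {a b c d : PP} :
    PP.Refines (PP.node a b) (PP.node c d) ↔
      (PP.Refines a c ∧ PP.Refines b d) ∨ (PP.Refines a d ∧ PP.Refines b c) := by
  constructor
  · intro h; exact refines_node_inv h c d rfl
  · rintro (⟨h1, h2⟩ | ⟨h1, h2⟩)
    · exact refines_node_mono h1 h2
    · exact (refines_node_mono h1 h2).trans (refines_swap _ _)

lemma equiv_refines {t t' : Shape} (h : Shape.Equiv t t') : PP.Refines t.toPP t'.toPP := by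
  induction h with
  | leaf => exact .refl
  | node _ _ ih1 ih2 => exact refines_node_mono ih1 ih2
  | swap _ _ ih1 ih2 => exact (refines_node_mono ih1 ih2).trans (refines_swap _ _)

lemma step_size {a b : PP} (h : PP.Step a b) : a.size = b.size := by
  induction h with
  | cherry a b => rfl
  | swap s t => simp [PP.size]; omega
  | left s _ ih => simp [PP.size, ih]
  | right s _ ih => simp [PP.size, ih]

lemma refines_size {a b : PP} (h : PP.Refines a b) : a.size = b.size := by
  induction h with
  | refl => rfl
  | tail _ st ih => exact ih.trans (step_size st)

lemma toPP_size (t : Shape) : t.toPP.size = t.leaves := by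
  induction t with
  | leaf => rfl
  | node l r ih1 ih2 => simp [Shape.toPP, PP.size, Shape.leaves, ih1, ih2]

lemma leaves_pos (t : Shape) : 1 ≤ t.leaves := by
  induction t with
  | leaf => exact le_refl 1
  | node l r ih1 ih2 => simp [Shape.leaves]; omega

lemma finite_shapes : ∀ n : ℕ, {t : Shape | t.leaves = n}.Finite := by
  intro n
  induction n using Nat.strong_induction_on with
  | _ n ih =>
    have hsub : {t : Shape | t.leaves = n} ⊆
        {Shape.leaf} ∪ ⋃ k ∈ Finset.Ico 1 n,
          Set.image2 Shape.node {t : Shape | t.leaves = k} {t : Shape | t.leaves = n - k} := by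
      intro t ht
      cases t with
      | leaf => exact Or.inl rfl
      | node l r =>
        right
        have hl := leaves_pos l
        have hr := leaves_pos r
        simp only [Set.mem_setOf_eq, Shape.leaves] at ht
        refine Set.mem_biUnion (show l.leaves ∈ Finset.Ico 1 n from ?_) ?_
        · simp only [Finset.mem_Ico]; omega
        · exact ⟨l, rfl, r, (by simp only [Set.mem_setOf_eq]; omega), rfl⟩
    refine Set.Finite.subset (Set.Finite.union (Set.finite_singleton _) ?_) hsub
    refine Set.Finite.biUnion (Finset.Ico 1 n).finite_toSet ?_
    intro k hk
    simp only [Finset.coe_Ico, Set.mem_Ico] at hk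
    exact Set.Finite.image2 _ (ih k (by omega)) (ih (n - k) (by omega))

def setG (π : PP) : Set Q := {q | ∃ t : Shape, Quot.mk _ t = q ∧ PP.Refines t.toPP π}

lemma setG_finite (π : PP) : (setG π).Finite := by
  apply Set.Finite.subset ((finite_shapes π.size).image (Quot.mk _))
  rintro q ⟨t, rfl, h⟩
  exact ⟨t, by rw [Set.mem_setOf_eq, ← toPP_size]; exact refines_size h, rfl⟩

lemma mem_setG {t : Shape} {π : PP} (h : Quot.mk _ t ∈ setG π) : PP.Refines t.toPP π := by
  obtain ⟨t', ht', h2⟩ := h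
  exact (equiv_refines (equiv_symm (mk_eq_mk.mp ht'))).trans h2

lemma setG_node (π₁ π₂ : PP) :
    setG (PP.node π₁ π₂) = Set.image2 qnode (setG π₁) (setG π₂) := by
  ext q
  constructor
  · rintro ⟨t, rfl, h⟩
    cases t with
    | leaf => exact absurd (refines_of_leaf h) (by simp)
    | node l r =>
      rcases refines_node_iff.mp h with ⟨h1, h2⟩ | ⟨h1, h2⟩
      · exact ⟨_, ⟨l, rfl, h1⟩, _, ⟨r, rfl, h2⟩, rfl⟩
      · refine ⟨_, ⟨r, rfl, h2⟩, _, ⟨l, rfl, h1⟩, ?_⟩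
        simp only [qnode_mk, mk_eq_mk]
        exact .swap (equiv_refl r) (equiv_refl l)
  · rintro ⟨x, ⟨l, rfl, h1⟩, y, ⟨r, rfl, h2⟩, rfl⟩
    exact ⟨Shape.node l r, rfl, refines_node_mono h1 h2⟩

lemma setG_inter {π₁ π₂ μ : PP} (hμ1 : PP.Refines μ π₁) (hμ2 : PP.Refines μ π₂)
    (hmeet : ∀ c, PP.Refines c π₁ → PP.Refines c π₂ → PP.Refines c μ) :
    setG π₁ ∩ setG π₂ = setG μ := by
  ext q
  constructor
  · rintro ⟨h1, h2⟩
    obtain ⟨t, rfl, ht⟩ := h1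
    exact ⟨t, rfl, hmeet _ ht (mem_setG h2)⟩
  · rintro ⟨t, rfl, ht⟩
    exact ⟨⟨t, rfl, ht.trans hμ1⟩, ⟨t, rfl, ht.trans hμ2⟩⟩

lemma Gc_eq (π : PP) : Gc π = ((setG_finite π).toFinset).card := by
  have h0 : Gc π = Nat.card (setG π) := rfl
  rw [h0, Nat.card_coe_set_eq, Set.ncard_eq_toFinset_card _ (setG_finite π)]

lemma card_image₂ {α β : Type*} [DecidableEq α] [DecidableEq β] (f : α → α → β)
    (hf : ∀ x y x' y', f x y = f x' y' ↔ (x = x' ∧ y = y') ∨ (x = y' ∧ y = x'))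
    (a b : Finset α) :
    2 * (Finset.image₂ f a b).card + (a ∩ b).card * ((a ∩ b).card - 1)
      = 2 * (a.card * b.card) := by
  classical
  set m := a ∩ b with hm
  have hcomm : ∀ x y, f x y = f y x := fun x y => (hf x y y x).mpr (Or.inr ⟨rfl, rfl⟩)
  set F : Sym2 α → β := Sym2.lift ⟨f, hcomm⟩ with hF
  have hFmk : ∀ x y : α, F (Sym2.mk x y) = f x y := fun x y => rfl
  have hFinj : Function.Injective F := by
    intro s s'
    induction s using Sym2.ind
    induction s' using Sym2.ind
    intro h
    rw [hFmk, hFmk] at h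
    rw [Sym2.eq_iff]
    exact (hf _ _ _ _).mp h
  have hfun : F ∘ Sym2.mk.uncurry = Function.uncurry f := by
    funext p
    cases p
    rfl
  have himg : Finset.image₂ f a b = ((a ×ˢ b).image Sym2.mk.uncurry).image F := by
    rw [← Finset.image_uncurry_product, Finset.image_image, hfun]
  have hcard1 : (Finset.image₂ f a b).card = ((a ×ˢ b).image Sym2.mk.uncurry).card := by
    rw [himg, Finset.card_image_of_injective _ hFinj]
  set D := (a ×ˢ b) \ (m ×ˢ m) with hD
  have hmm_sub : m ×ˢ m ⊆ a ×ˢ b :=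
    Finset.product_subset_product Finset.inter_subset_left Finset.inter_subset_right
  have hsplit : (a ×ˢ b).image Sym2.mk.uncurry = D.image Sym2.mk.uncurry ∪ m.sym2 := by
    rw [Finset.sym2_eq_image, ← Finset.image_union, Finset.sdiff_union_of_subset hmm_sub]
  have hdisj : Disjoint (D.image Sym2.mk.uncurry) m.sym2 := by
    rw [Finset.disjoint_left]
    intro z hz hz2
    obtain ⟨p, hp, rfl⟩ := Finset.mem_image.mp hz
    obtain ⟨x, y⟩ := p
    rw [Function.uncurry_apply_pair, Finset.mk_mem_sym2_iff] at hz2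
    rw [hD, Finset.mem_sdiff] at hp
    exact hp.2 (Finset.mem_product.mpr hz2)
  have hinj : Set.InjOn (Sym2.mk.uncurry : α × α → Sym2 α) ↑D := by
    intro p hp q hq hpq
    obtain ⟨x, y⟩ := p
    obtain ⟨x', y'⟩ := q
    simp only [hD, Finset.coe_sdiff, Set.mem_diff, Finset.coe_product, Set.mem_prod,
      Finset.mem_coe] at hp hq
    rcases Sym2.eq_iff.mp hpq with ⟨rfl, rfl⟩ | ⟨rfl, rfl⟩
    · rfl
    · exfalso
      exact hp.2 ⟨Finset.mem_inter.mpr ⟨hp.1.1, hq.1.2⟩, Finset.mem_inter.mpr ⟨hq.1.1, hp.1.2⟩⟩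
  have hDcard : D.card = a.card * b.card - m.card * m.card := by
    rw [hD, Finset.card_sdiff_of_subset hmm_sub, Finset.card_product, Finset.card_product]
  have hm2 : m.sym2.card * 2 = m.card * m.card + m.card := by
    rw [Finset.card_sym2, Nat.choose_two_right, Nat.succ_sub_one,
      Nat.div_mul_cancel (by rw [Nat.mul_comm]; exact (Nat.even_mul_succ_self m.card).two_dvd)]
    ring
  have hcards : ((a ×ˢ b).image Sym2.mk.uncurry).card = D.card + m.sym2.card := by
    rw [hsplit, Finset.card_union_of_disjoint hdisj, Finset.card_image_of_injOn hinj]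
  have hle : m.card * m.card ≤ a.card * b.card := by
    calc m.card * m.card = (m ×ˢ m).card := (Finset.card_product _ _).symm
      _ ≤ (a ×ˢ b).card := Finset.card_le_card hmm_sub
      _ = a.card * b.card := Finset.card_product _ _
  have hc1 : m.card * (m.card - 1) = m.card * m.card - m.card := by
    cases hmc : m.card with
    | zero => simp
    | succ n =>
      have : (n + 1) * (n + 1) = (n + 1) * n + (n + 1) := by ring
      simp only [Nat.succ_sub_one]
      omega
  have hck : m.card ≤ m.card * m.card := by
    rcases Nat.eq_zero_or_pos m.card with h | h
    · simp [h]
    · exact Nat.le_mul_of_pos_left _ h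
  rw [hcard1, hcards, hDcard, hc1]
  generalize hk : m.card * m.card = k at *
  generalize hp : a.card * b.card = p at *
  omega


end PPProof

open PPProof in
/-- Proposition 3: for binary perfect phylogenies `π₁, π₂`, the number of unranked
unlabeled tree shapes compatible with `(π₁, π₂)` equals
`|G(π₁)||G(π₂)| - |G(π₁ ∧ π₂)|(|G(π₁ ∧ π₂)| - 1)/2` when the meet `π₁ ∧ π₂` (the
largest common refinement) is nonempty, and `|G(π₁)||G(π₂)|` when no common refinement
exists. -/
theorem unranked_compatible_node (π₁ π₂ : PP) :
    (∀ μ : PP,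
      (PP.Refines μ π₁ ∧ PP.Refines μ π₂ ∧
        ∀ c : PP, PP.Refines c π₁ → PP.Refines c π₂ → PP.Refines c μ) →
      2 * (Gc (PP.node π₁ π₂) : ℤ) =
        2 * (Gc π₁ : ℤ) * (Gc π₂ : ℤ) - (Gc μ : ℤ) * ((Gc μ : ℤ) - 1)) ∧
    ((¬ ∃ μ : PP, PP.Refines μ π₁ ∧ PP.Refines μ π₂) →
      Gc (PP.node π₁ π₂) = Gc π₁ * Gc π₂) := by
  classical
  have hAf := setG_finite π₁
  have hBf := setG_finite π₂
  have hSf := setG_finite (PP.node π₁ π₂)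
  have hS_eq : hSf.toFinset = Finset.image₂ qnode hAf.toFinset hBf.toFinset := by
    ext q
    simp only [Set.Finite.mem_toFinset, Finset.mem_image₂, setG_node π₁ π₂, Set.mem_image2]
  have hkey : 2 * hSf.toFinset.card
      + (hAf.toFinset ∩ hBf.toFinset).card * ((hAf.toFinset ∩ hBf.toFinset).card - 1)
      = 2 * (hAf.toFinset.card * hBf.toFinset.card) := by
    rw [hS_eq]
    exact card_image₂ qnode (fun x y x' y' => qnode_eq_qnode) hAf.toFinset hBf.toFinset
  constructor
  · rintro μ ⟨hμ1, hμ2, hmeet⟩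
    have hab : hAf.toFinset ∩ hBf.toFinset = (setG_finite μ).toFinset := by
      ext q
      simp only [Finset.mem_inter, Set.Finite.mem_toFinset,
        ← setG_inter hμ1 hμ2 hmeet, Set.mem_inter_iff]
    rw [hab] at hkey
    rw [Gc_eq (PP.node π₁ π₂), Gc_eq π₁, Gc_eq π₂, Gc_eq μ]
    set c := (setG_finite μ).toFinset.card with hc
    have hcast : ((c * (c - 1) : ℕ) : ℤ) = (c : ℤ) * ((c : ℤ) - 1) := by
      cases c with
      | zero => simp
      | succ n => push_cast [Nat.succ_sub_one]; ring
    have hZ : (2 * (hSf.toFinset.card : ℤ)) + ((c * (c - 1) : ℕ) : ℤ)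
        = 2 * ((hAf.toFinset.card : ℤ) * (hBf.toFinset.card : ℤ)) := by
      exact_mod_cast congrArg (Nat.cast : ℕ → ℤ) hkey
    rw [hcast] at hZ
    linarith
  · intro h
    have hab0 : hAf.toFinset ∩ hBf.toFinset = ∅ := by
      rw [Finset.eq_empty_iff_forall_notMem]
      intro q hq
      rw [Finset.mem_inter, Set.Finite.mem_toFinset, Set.Finite.mem_toFinset] at hq
      obtain ⟨t, rfl, ht1⟩ := hq.1
      exact h ⟨t.toPP, ht1, mem_setG hq.2⟩
    rw [hab0] at hkey
    simp only [Finset.card_empty] at hkey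
    rw [Gc_eq (PP.node π₁ π₂), Gc_eq π₁, Gc_eq π₂]
    omega
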